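/- Let g : ℝ → ℝ satisfy (g1) and (g2) with constant m > 0, define, for t ≥ 0, g₁(t) = max(g(t)+mt, 0) and g₂(t) = g₁(t) − g(t), extended oddly to t < 0. Let {u_j}_{j∈ℕ} ⊂ L²(ℝ^N) and u ∈ L²(ℝ^N) be such that u_j(x) → u(x) for a.e. x ∈ ℝ^N, g₂(u_j)u_j is integrable for every j, g₂(u)u is integrable, and ∫_{ℝ^N} g₂(u_j(x))u_j(x) dx → ∫_{ℝ^N} g₂(u(x))u(x) dx. Then u_j → u strongly in L²(ℝ^N). -/

import Mathlib

open MeasureTheory Filter Topology ENNReal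

/-- `g₁(t) = (g(t) + m t)⁺` for `t ≥ 0`, extended as an odd function for `t < 0`. -/
noncomputable def gOne (g : ℝ → ℝ) (m : ℝ) (t : ℝ) : ℝ :=
  if 0 ≤ t then max (g t + m * t) 0 else -(max (g (-t) + m * (-t)) 0)

/-- `g₂ = g₁ − g` (which is the odd extension of `g₁(t) − g(t)`, `t ≥ 0`, since `g` is odd). -/
noncomputable def gTwo (g : ℝ → ℝ) (m : ℝ) (t : ℝ) : ℝ := gOne g m t - g t

lemma gOne_continuous (g : ℝ → ℝ) (m : ℝ) (hg : Continuous g) (hodd : ∀ t, g (-t) = -g t) :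
    Continuous (gOne g m) := by
  have h0 : g 0 = 0 := by have := hodd 0; simp at this; linarith
  unfold gOne
  apply Continuous.if_le
  · exact (hg.add (continuous_const.mul continuous_id)).max continuous_const
  · exact (((hg.comp continuous_neg).add (continuous_const.mul continuous_neg)).max
      continuous_const).neg
  · exact continuous_const
  · exact continuous_id
  · intro t ht
    simp [← ht, h0]

lemma gTwo_continuous (g : ℝ → ℝ) (m : ℝ) (hg : Continuous g) (hodd : ∀ t, g (-t) = -g t) :
    Continuous (gTwo g m) :=
  (gOne_continuous g m hg hodd).sub hg

lemma key_ineq (g : ℝ → ℝ) (m : ℝ) (hodd : ∀ t, g (-t) = -g t) (t : ℝ) :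
    m * t ^ 2 ≤ gTwo g m t * t := by
  rcases le_or_gt 0 t with ht | ht
  · have h2 : gTwo g m t = max (g t + m * t) 0 - g t := by
      rw [gTwo, gOne, if_pos ht]
    have h3 : g t + m * t ≤ max (g t + m * t) 0 := le_max_left _ _
    have h5 : m * t ≤ gTwo g m t := by rw [h2]; linarith
    nlinarith [mul_le_mul_of_nonneg_right h5 ht]
  · have h2 : gTwo g m t = -(max (g (-t) + m * (-t)) 0) - g t := by
      rw [gTwo, gOne, if_neg (not_le.2 ht)]
    have h3 : g (-t) + m * (-t) ≤ max (g (-t) + m * (-t)) 0 := le_max_left _ _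
    have h4 : g (-t) = -g t := hodd t
    have h5 : gTwo g m t ≤ m * t := by rw [h2]; linarith
    nlinarith [mul_le_mul_of_nonpos_right h5 ht.le]

/-- a.e. convergence together with convergence of `∫ g₂(u_j)u_j`
forces strong `L²` convergence. -/
theorem strong_L2_convergence
    (N : ℕ) (hN : 1 ≤ N)
    (g : ℝ → ℝ) (m : ℝ)
-- (g1)
    (hg1 : ContDiff ℝ 1 g) (hodd : ∀ t, g (-t) = -g t)
    -- (g2)
    (hm : 0 < m)
    (hg2a : ⊥ < Filter.liminf (fun t : ℝ => ((g t / t : ℝ) : EReal)) (𝓝[>] (0:ℝ)))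
    (hg2b : Filter.liminf (fun t : ℝ => ((g t / t : ℝ) : EReal)) (𝓝[>] (0:ℝ)) ≤
        Filter.limsup (fun t : ℝ => ((g t / t : ℝ) : EReal)) (𝓝[>] (0:ℝ)))
    (hg2c : Filter.limsup (fun t : ℝ => ((g t / t : ℝ) : EReal)) (𝓝[>] (0:ℝ))
        = ((-m : ℝ) : EReal))
    (u : ℕ → EuclideanSpace ℝ (Fin N) → ℝ) (v : EuclideanSpace ℝ (Fin N) → ℝ)
    (hu : ∀ j, MemLp (u j) 2 volume) (hv : MemLp v 2 volume)
    (hae : ∀ᵐ x : EuclideanSpace ℝ (Fin N), Tendsto (fun j => u j x) atTop (𝓝 (v x)))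
    (hint : ∀ j, Integrable (fun x => gTwo g m (u j x) * u j x) volume)
    (hintv : Integrable (fun x => gTwo g m (v x) * v x) volume)
    (hconv : Tendsto (fun j => ∫ x : EuclideanSpace ℝ (Fin N), gTwo g m (u j x) * u j x)
      atTop (𝓝 (∫ x : EuclideanSpace ℝ (Fin N), gTwo g m (v x) * v x))) :
    Tendsto (fun j => eLpNorm (u j - v) 2 volume) atTop (𝓝 0) := by
  classical
  set μ : Measure (EuclideanSpace ℝ (Fin N)) := volume with hμ
  have hgc : Continuous g := hg1.continuous
  have hcont : Continuous (gTwo g m) := gTwo_continuous g m hgc hodd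
  have key : ∀ t : ℝ, m * t ^ 2 ≤ gTwo g m t * t := key_ineq g m hodd
  have keynn : ∀ t : ℝ, 0 ≤ gTwo g m t * t := fun t =>
    le_trans (by positivity) (key t)
  -- the auxiliary nonnegative functions
  set Φ : ℕ → EuclideanSpace ℝ (Fin N) → ℝ := fun j x =>
    gTwo g m (u j x) * u j x + gTwo g m (v x) * v x - m / 2 * (u j x - v x) ^ 2 with hΦdef
  have hΦnn : ∀ j x, 0 ≤ Φ j x := by
    intro j x
    have k1 := key (u j x)
    have k2 := key (v x)
    have k3 : 0 ≤ m * (u j x + v x) ^ 2 := by positivity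
    simp only [hΦdef]
    nlinarith
  have hqnn : ∀ j x, 0 ≤ m / 2 * (u j x - v x) ^ 2 := by
    intro j x; positivity
  -- measurability
  have hmu : ∀ j, AEMeasurable (u j) μ := fun j => (hu j).aestronglyMeasurable.aemeasurable
  have hmv : AEMeasurable v μ := hv.aestronglyMeasurable.aemeasurable
  have hmΦ : ∀ j, AEMeasurable (fun x => ENNReal.ofReal (Φ j x)) μ := by
    intro j
    have hG : Continuous (fun p : ℝ × ℝ =>
        gTwo g m p.1 * p.1 + gTwo g m p.2 * p.2 - m / 2 * (p.1 - p.2) ^ 2) := by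
      fun_prop
    exact ((hG.measurable.comp_aemeasurable ((hmu j).prodMk hmv))).ennreal_ofReal
  have hmq : ∀ j, AEMeasurable (fun x => ENNReal.ofReal (m / 2 * (u j x - v x) ^ 2)) μ := by
    intro j
    have hG : Continuous (fun p : ℝ × ℝ => m / 2 * (p.1 - p.2) ^ 2) := by fun_prop
    exact ((hG.measurable.comp_aemeasurable ((hmu j).prodMk hmv))).ennreal_ofReal
  -- integrability
  have hsq : ∀ j, Integrable (fun x => (u j x - v x) ^ 2) μ := fun j => by
    exact ((hu j).sub hv).integrable_sq
  have hsum : ∀ j, Integrable (fun x => gTwo g m (u j x) * u j x + gTwo g m (v x) * v x) μ :=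
    fun j => by exact (hint j).add hintv
  -- lintegral quantities
  set A : ℕ → ℝ≥0∞ := fun j => ∫⁻ x, ENNReal.ofReal (Φ j x) ∂μ with hA
  set r : ℕ → ℝ≥0∞ := fun j => ∫⁻ x, ENNReal.ofReal (m / 2 * (u j x - v x) ^ 2) ∂μ with hr
  set C : ℕ → ℝ := fun j => ∫ x, gTwo g m (u j x) * u j x ∂μ with hC
  set Cv : ℝ := ∫ x, gTwo g m (v x) * v x ∂μ with hCinf
  set T : ℕ → ℝ≥0∞ := fun j => ENNReal.ofReal (C j + Cv) with hT
  -- splitting identity : A j + r j = T j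
  have hsplit : ∀ j, A j + r j = T j := by
    intro j
    have h1 : ∀ x, ENNReal.ofReal (Φ j x) + ENNReal.ofReal (m / 2 * (u j x - v x) ^ 2)
        = ENNReal.ofReal (gTwo g m (u j x) * u j x + gTwo g m (v x) * v x) := by
      intro x
      rw [← ENNReal.ofReal_add (hΦnn j x) (hqnn j x)]
      congr 1
      simp only [hΦdef]
      ring
    have h2 : A j + r j
        = ∫⁻ x, ENNReal.ofReal (gTwo g m (u j x) * u j x + gTwo g m (v x) * v x) ∂μ := by
      rw [hA, hr, ← lintegral_add_left' (hmΦ j)]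
      exact lintegral_congr fun x => h1 x
    rw [h2, ← ofReal_integral_eq_lintegral_ofReal (hsum j)
      (Filter.Eventually.of_forall fun x => add_nonneg (keynn _) (keynn _))]
    rw [hT]
    congr 1
    exact integral_add (hint j) hintv
  -- T tends to ofReal (Cv + Cv)
  have hTtend : Tendsto T atTop (𝓝 (ENNReal.ofReal (Cv + Cv))) := by
    exact (ENNReal.continuous_ofReal.tendsto _).comp (hconv.add tendsto_const_nhds)
  have hTfin : ENNReal.ofReal (Cv + Cv) ≠ ⊤ := ENNReal.ofReal_ne_top
  -- Fatou
  have hfatou : ENNReal.ofReal (Cv + Cv) ≤ atTop.liminf A := by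
    have hptw : ∀ᵐ x ∂μ, atTop.liminf (fun j => ENNReal.ofReal (Φ j x))
        = ENNReal.ofReal (2 * (gTwo g m (v x) * v x)) := by
      filter_upwards [hae] with x hx
      have hΦt : Tendsto (fun j => Φ j x) atTop (𝓝 (2 * (gTwo g m (v x) * v x))) := by
        have hc : Continuous (fun t : ℝ =>
            gTwo g m t * t + gTwo g m (v x) * v x - m / 2 * (t - v x) ^ 2) := by fun_prop
        have h := (hc.tendsto (v x)).comp hx
        rw [Function.comp_def] at h
        convert h using 2
        ring
      exact ((ENNReal.continuous_ofReal.tendsto _).comp hΦt).liminf_eq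
    calc ENNReal.ofReal (Cv + Cv)
        = ∫⁻ x, ENNReal.ofReal (2 * (gTwo g m (v x) * v x)) ∂μ := by
          rw [← ofReal_integral_eq_lintegral_ofReal (hintv.const_mul 2)
            (Filter.Eventually.of_forall fun x => by
              have := keynn (v x); positivity)]
          congr 1
          rw [integral_const_mul]
          ring
      _ = ∫⁻ x, atTop.liminf (fun j => ENNReal.ofReal (Φ j x)) ∂μ :=
          (lintegral_congr_ae (hptw.mono fun x hx => hx.symm))
      _ ≤ atTop.liminf A := lintegral_liminf_le' hmΦ
  -- conclude r → 0
  have hr0 : Tendsto r atTop (𝓝 0) := by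
    rw [ENNReal.tendsto_nhds_zero]
    intro ε hε
    set δ := ε / 2 with hδdef
    have hδ : 0 < δ := ENNReal.half_pos hε.ne'
    set L := ENNReal.ofReal (Cv + Cv) with hL
    have hev1 : ∀ᶠ j in atTop, T j < L + δ := by
      apply hTtend.eventually_lt_const
      exact ENNReal.lt_add_right hTfin hδ.ne'
    have hev2 : ∀ᶠ j in atTop, L - δ ≤ A j := by
      rcases le_or_gt L δ with h | h
      · simp only [tsub_eq_zero_of_le h]
        exact Filter.Eventually.of_forall fun j => zero_le
      · have hlt : L - δ < L := ENNReal.sub_lt_self hTfin (by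
          intro h0; rw [h0] at h; exact absurd h (by simpa using hδ.not_ge)) hδ.ne'
        exact (Filter.eventually_lt_of_lt_liminf (lt_of_lt_of_le hlt hfatou)).mono
          fun j hj => hj.le
    filter_upwards [hev1, hev2] with j h1 h2
    have hAne : A j ≠ ⊤ := by
      refine ne_top_of_le_ne_top (?_ : T j ≠ ⊤) (le_self_add.trans_eq (hsplit j))
      simp only [hT]
      exact ENNReal.ofReal_ne_top
    have hrle : r j ≤ T j - A j :=
      (ENNReal.cancel_of_ne hAne).le_tsub_of_add_le_left (hsplit j).le
    have h3 : T j - A j ≤ (L + δ) - (L - δ) := tsub_le_tsub h1.le h2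
    have h4 : (L + δ) - (L - δ) ≤ ε := by
      rw [tsub_le_iff_left]
      calc L + δ ≤ ((L - δ) + δ) + δ := add_le_add le_tsub_add le_rfl
        _ = (L - δ) + (δ + δ) := by rw [add_assoc]
        _ = (L - δ) + ε := by rw [hδdef, ENNReal.add_halves]
    exact hrle.trans (h3.trans h4)
  -- from r → 0, deduce ∫⁻ (u j - v)² → 0
  set c : ℝ≥0∞ := ENNReal.ofReal (m / 2) with hc
  have hc0 : c ≠ 0 := by
    simp only [hc, ne_eq, ENNReal.ofReal_eq_zero, not_le]
    linarith
  set s : ℕ → ℝ≥0∞ := fun j => ∫⁻ x, ENNReal.ofReal ((u j x - v x) ^ 2) ∂μ with hs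
  have hrs : ∀ j, r j = c * s j := by
    intro j
    rw [hr, hs, ← lintegral_const_mul' _ _ ENNReal.ofReal_ne_top]
    exact lintegral_congr fun x => by
      rw [← ENNReal.ofReal_mul (by linarith : (0:ℝ) ≤ m / 2)]
  have hs0 : Tendsto s atTop (𝓝 0) := by
    have : Tendsto (fun j => c⁻¹ * r j) atTop (𝓝 (c⁻¹ * 0)) :=
      ENNReal.Tendsto.const_mul hr0 (Or.inr (ENNReal.inv_ne_top.2 hc0))
    rw [mul_zero] at this
    refine this.congr fun j => ?_
    rw [hrs j, ← mul_assoc, ENNReal.inv_mul_cancel hc0 ENNReal.ofReal_ne_top, one_mul]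
  -- convert to eLpNorm
  have help : ∀ j, eLpNorm (u j - v) 2 μ = (s j) ^ (1 / 2 : ℝ) := by
    intro j
    rw [eLpNorm_eq_lintegral_rpow_enorm_toReal (by norm_num) (by norm_num)]
    congr 1
    · refine lintegral_congr fun x => ?_
      have habs : ‖(u j - v) x‖ₑ = ENNReal.ofReal |u j x - v x| := by
        simp [Real.enorm_eq_ofReal_abs]
      rw [habs, ENNReal.toReal_ofNat,
        ENNReal.ofReal_rpow_of_nonneg (abs_nonneg _) (by norm_num : (0:ℝ) ≤ 2)]
      congr 1
      rw [show ((2:ℝ)) = ((2:ℕ):ℝ) by norm_num, Real.rpow_natCast, sq_abs]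
  have hfinal : Tendsto (fun j => (s j) ^ (1 / 2 : ℝ)) atTop (𝓝 ((0:ℝ≥0∞) ^ (1 / 2 : ℝ))) :=
    hs0.ennrpow_const (1 / 2)
  rw [ENNReal.zero_rpow_of_pos (by norm_num)] at hfinal
  exact hfinal.congr fun j => (help j).symm
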